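/- (Chang's theorem) If A ⊆ G is a subset of a finite abelian group with density α := |A|/|G| > 0 and ε ∈ (0,1], and Λ := {γ ∈ Ĝ : |1̂_A(γ)| ≥ εα}, then there is a set Γ ⊆ Ĝ with |Γ| ≤ 2ε⁻² log α⁻¹ such that Λ ⊆ ⟨Γ⟩ := {∑_{λ∈Γ} σ_λ λ : σ ∈ {−1,0,1}^Γ}. -/

import Mathlib

open Finset

/-- The chord bound: for `|u| ≤ 1`, `exp (ε * u) ≤ cosh ε + u * sinh ε`. -/
lemma chord_bound (ε u : ℝ) (hu : |u| ≤ 1) :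
    Real.exp (ε * u) ≤ Real.cosh ε + u * Real.sinh ε := by
  obtain ⟨hu1, hu2⟩ := abs_le.1 hu
  have h := convexOn_exp.2 (Set.mem_univ ε) (Set.mem_univ (-ε))
    (by linarith : (0:ℝ) ≤ (1 + u) / 2) (by linarith : (0:ℝ) ≤ (1 - u) / 2) (by ring)
  simp only [smul_eq_mul] at h
  have h1 : (1 + u) / 2 * ε + (1 - u) / 2 * (-ε) = ε * u := by ring
  rw [h1] at h
  rw [Real.cosh_eq, Real.sinh_eq]
  linarith [h]

/-- Jensen's inequality for `exp` and finite averages. -/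
lemma exp_avg_le {ι : Type*} (s : Finset ι) (hs : s.Nonempty) (f : ι → ℝ) :
    Real.exp ((∑ x ∈ s, f x) / s.card) ≤ (∑ x ∈ s, Real.exp (f x)) / s.card := by
  have hcard : (0:ℝ) < s.card := Nat.cast_pos.2 (Finset.card_pos.2 hs)
  have h := convexOn_exp.map_sum_le (t := s) (w := fun _ => (s.card : ℝ)⁻¹) (p := f)
    (fun i _ => by positivity)
    (by rw [Finset.sum_const, nsmul_eq_mul]; field_simp)
    (fun i _ => Set.mem_univ _)
  simp only [smul_eq_mul] at h
  rw [← Finset.mul_sum, inv_mul_eq_div] at h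
  calc Real.exp ((∑ x ∈ s, f x) / s.card) ≤ ∑ i ∈ s, (s.card : ℝ)⁻¹ * Real.exp (f i) := h
    _ = (∑ x ∈ s, Real.exp (f x)) / s.card := by rw [← Finset.mul_sum, inv_mul_eq_div]

/-- The key analytic estimate in Chang's theorem: a dissociated subset of the `ε`-spectrum
of `A` has cardinality at most `2 ε⁻² log α⁻¹`. -/
lemma chang_dissociated_bound {G : Type*} [AddCommGroup G] [Fintype G] (A : Finset G)
    (ε α : ℝ) (hα : α = (A.card : ℝ) / (Fintype.card G : ℝ)) (hpos : 0 < α)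
    (hε : 0 < ε) (Γ : Finset (AddChar G ℂ))
    (hdis : AddDissociated (Γ : Set (AddChar G ℂ)))
    (hmem : ∀ γ ∈ Γ,
      ε * α ≤ ‖(∑ x ∈ A, (starRingEnd ℂ) (γ x)) / (Fintype.card G : ℂ)‖) :
    (Γ.card : ℝ) ≤ 2 * ε⁻¹ ^ 2 * Real.log α⁻¹ := by
  classical
  set N : ℝ := (Fintype.card G : ℝ) with hN
  have hNpos : (0:ℝ) < N := Nat.cast_pos.2 Fintype.card_pos
  have hApos : (0:ℝ) < A.card := by
    by_contra h
    push_neg at h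
    have : (A.card : ℝ) = 0 := le_antisymm h (by positivity)
    rw [hα, this] at hpos; simp at hpos
  have hAne : A.Nonempty := Finset.card_pos.1 (by exact_mod_cast hApos)
  have hαN : α * N = A.card := by rw [hα]; field_simp
  set m : ℕ := Γ.card with hm
  -- unnormalized Fourier coefficients
  set ν : AddChar G ℂ → ℂ := fun γ => ∑ x ∈ A, (starRingEnd ℂ) (γ x) with hν
  have hν_lb : ∀ γ ∈ Γ, ε * α * N ≤ ‖ν γ‖ := by
    intro γ hγ
    have := hmem γ hγ
    rw [norm_div] at this
    have hNC : ‖(Fintype.card G : ℂ)‖ = N := by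
      rw [hN]; simp
    rw [hNC] at this
    calc ε * α * N = (ε * α) * N := by ring
      _ ≤ (‖ν γ‖ / N) * N := by
          apply mul_le_mul_of_nonneg_right this hNpos.le
      _ = ‖ν γ‖ := by field_simp
  have hν_ne : ∀ γ ∈ Γ, ν γ ≠ 0 := by
    intro γ hγ h0
    have := hν_lb γ hγ
    rw [h0] at this
    simp at this
    nlinarith
  -- unimodular weights
  set w : AddChar G ℂ → ℂ := fun γ => ν γ / ((‖ν γ‖ : ℝ) : ℂ) with hw
  have hw_abs : ∀ γ ∈ Γ, ‖w γ‖ = 1 := by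
    intro γ hγ
    rw [hw]
    simp only [norm_div, Complex.norm_real, norm_norm]
    rw [div_self]
    exact fun h => hν_ne γ hγ (by simpa using h)
  set f : G → ℝ := fun x => ∑ γ ∈ Γ, (w γ * γ x).re with hf
  -- Step 1: lower bound for the sum of f over A
  have hsumA : (m : ℝ) * (ε * α * N) ≤ ∑ x ∈ A, f x := by
    have hswap : ∑ x ∈ A, f x = ∑ γ ∈ Γ, (w γ * (starRingEnd ℂ) (ν γ)).re := by
      rw [hf]
      rw [Finset.sum_comm]
      congr 1
      ext γ
      rw [← Complex.re_sum, ← Finset.mul_sum]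
      congr 2
      rw [hν, map_sum]
      congr 1; ext x
      rw [Complex.conj_conj]
    rw [hswap]
    have hterm : ∀ γ ∈ Γ, (w γ * (starRingEnd ℂ) (ν γ)).re = ‖ν γ‖ := by
      intro γ hγ
      have : w γ * (starRingEnd ℂ) (ν γ) = ((‖ν γ‖ : ℝ) : ℂ) := by
        rw [hw]
        rw [div_mul_eq_mul_div, Complex.mul_conj, Complex.normSq_eq_norm_sq]
        rw [sq]
        rw [Complex.ofReal_mul, mul_div_assoc]
        rw [div_self (by simpa using fun h => hν_ne γ hγ (by simpa using h) :
          ((‖ν γ‖ : ℝ) : ℂ) ≠ 0)]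
        ring
      rw [this, Complex.ofReal_re]
    calc (m : ℝ) * (ε * α * N) = ∑ _γ ∈ Γ, ε * α * N := by
          rw [Finset.sum_const, hm, nsmul_eq_mul]
      _ ≤ ∑ γ ∈ Γ, (w γ * (starRingEnd ℂ) (ν γ)).re := by
          apply Finset.sum_le_sum
          intro γ hγ
          rw [hterm γ hγ]
          exact hν_lb γ hγ
  -- Step 2: pointwise bound
  have hpt : ∀ x : G, Real.exp (ε * f x) ≤
      ∏ γ ∈ Γ, (Real.cosh ε + ((Real.sinh ε : ℂ) * (w γ * γ x)).re) := by
    intro x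
    rw [hf, Finset.mul_sum, Real.exp_sum]
    apply Finset.prod_le_prod (fun γ _ => (Real.exp_pos _).le)
    intro γ hγ
    have habs : ‖w γ * γ x‖ = 1 := by
      rw [norm_mul, hw_abs γ hγ]
      have : ‖γ x‖ = 1 := AddChar.norm_apply γ x
      rw [this, mul_one]
    have hre : |(w γ * γ x).re| ≤ 1 := by
      calc |(w γ * γ x).re| ≤ ‖w γ * γ x‖ := Complex.abs_re_le_norm _
        _ = 1 := habs
    have := chord_bound ε ((w γ * γ x).re) hre
    rw [Complex.re_ofReal_mul]
    linarith [this]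
  -- Step 3: randomisation
  have hrand : ∑ x : G, ∏ γ ∈ Γ, (Real.cosh ε + ((Real.sinh ε : ℂ) * (w γ * γ x)).re)
      = N * Real.cosh ε ^ m := by
    set c : AddChar G ℂ → ℝ := fun ψ => if ψ ∈ Γ then Real.cosh ε else 1 with hc
    set d : AddChar G ℂ → ℂ := fun ψ => if ψ ∈ Γ then (Real.sinh ε : ℂ) * w ψ else 0 with hd
    have hsupp : {ψ : AddChar G ℂ | d ψ ≠ 0} ⊆ (Γ : Set (AddChar G ℂ)) := by
      intro ψ hψ
      by_contra h
      rw [Finset.mem_coe] at h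
      simp only [Set.mem_setOf_eq, hd] at hψ
      rw [if_neg h] at hψ
      exact hψ rfl
    have hrnd := AddDissociated.randomisation c d (hdis.subset hsupp)
    have hprod : ∀ a : G, ∏ ψ : AddChar G ℂ, (c ψ + (d ψ * ψ a).re)
        = ∏ γ ∈ Γ, (Real.cosh ε + ((Real.sinh ε : ℂ) * (w γ * γ a)).re) := by
      intro a
      rw [← Finset.prod_subset (Finset.subset_univ Γ)
        (fun ψ _ hψ => by simp [hc, hd, hψ])]
      apply Finset.prod_congr rfl
      intro ψ hψ
      simp [hc, hd, hψ, mul_assoc]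
    have hcprod : ∏ ψ : AddChar G ℂ, c ψ = Real.cosh ε ^ m := by
      rw [← Finset.prod_subset (Finset.subset_univ Γ)
        (fun ψ _ hψ => by simp [hc, hψ])]
      rw [Finset.prod_congr rfl (fun ψ hψ => by simp [hc, hψ] : ∀ ψ ∈ Γ, c ψ = Real.cosh ε)]
      rw [Finset.prod_const, hm]
    rw [Fintype.expect_eq_sum_div_card] at hrnd
    simp only [hprod, hcprod] at hrnd
    have : ∑ x : G, ∏ γ ∈ Γ, (Real.cosh ε + ((Real.sinh ε : ℂ) * (w γ * γ x)).re)
        = (Fintype.card G : ℝ) * (Real.cosh ε ^ m) := by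
      rw [← hrnd]; field_simp
    rw [this, hN]
  -- Combine
  have hcosh : Real.cosh ε ^ m ≤ Real.exp ((m : ℝ) * ε ^ 2 / 2) := by
    calc Real.cosh ε ^ m ≤ Real.exp (ε ^ 2 / 2) ^ m :=
          pow_le_pow_left₀ (Real.cosh_pos (x := ε)).le (Real.cosh_le_exp_half_sq ε) m
      _ = Real.exp ((m : ℝ) * ε ^ 2 / 2) := by
          rw [← Real.exp_nat_mul]; ring_nf
  have hjensen := exp_avg_le A hAne (fun x => ε * f x)
  have hlhs : (m : ℝ) * ε ^ 2 ≤ (∑ x ∈ A, ε * f x) / A.card := by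
    rw [← Finset.mul_sum]
    rw [le_div_iff₀ hApos]
    calc (m : ℝ) * ε ^ 2 * A.card = ε * ((m : ℝ) * (ε * α * N)) := by
          rw [← hαN]; ring
      _ ≤ ε * ∑ x ∈ A, f x := by
          apply mul_le_mul_of_nonneg_left hsumA hε.le
  have hrhs : (∑ x ∈ A, Real.exp (ε * f x)) / A.card
      ≤ α⁻¹ * Real.exp ((m : ℝ) * ε ^ 2 / 2) := by
    have h1 : ∑ x ∈ A, Real.exp (ε * f x) ≤ ∑ x : G, Real.exp (ε * f x) :=
      Finset.sum_le_sum_of_subset_of_nonneg (Finset.subset_univ A)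
        (fun _ _ _ => (Real.exp_pos _).le)
    have h2 : ∑ x : G, Real.exp (ε * f x) ≤ N * Real.cosh ε ^ m := by
      rw [← hrand]
      exact Finset.sum_le_sum (fun x _ => hpt x)
    have h3 : N * Real.cosh ε ^ m ≤ N * Real.exp ((m : ℝ) * ε ^ 2 / 2) :=
      mul_le_mul_of_nonneg_left hcosh hNpos.le
    rw [div_le_iff₀ hApos]
    calc (∑ x ∈ A, Real.exp (ε * f x)) ≤ N * Real.exp ((m : ℝ) * ε ^ 2 / 2) := by
          linarith
      _ = α⁻¹ * Real.exp ((m : ℝ) * ε ^ 2 / 2) * A.card := by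
          rw [← hαN]; field_simp
  have hkey : Real.exp ((m : ℝ) * ε ^ 2) ≤ α⁻¹ * Real.exp ((m : ℝ) * ε ^ 2 / 2) :=
    le_trans (le_trans (Real.exp_le_exp.2 hlhs) hjensen) hrhs
  have hhalf : Real.exp ((m : ℝ) * ε ^ 2 / 2) ≤ α⁻¹ := by
    have hsplit : Real.exp ((m : ℝ) * ε ^ 2)
        = Real.exp ((m : ℝ) * ε ^ 2 / 2) * Real.exp ((m : ℝ) * ε ^ 2 / 2) := by
      rw [← Real.exp_add]; ring_nf
    rw [hsplit] at hkey
    exact le_of_mul_le_mul_right hkey (Real.exp_pos _)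
  have hlog : (m : ℝ) * ε ^ 2 / 2 ≤ Real.log α⁻¹ :=
    (Real.le_log_iff_exp_le (by positivity)).2 hhalf
  have hε2 : (0:ℝ) < ε ^ 2 := by positivity
  calc (m : ℝ) = 2 * ε⁻¹ ^ 2 * ((m : ℝ) * ε ^ 2 / 2) := by field_simp
    _ ≤ 2 * ε⁻¹ ^ 2 * Real.log α⁻¹ := by
        apply mul_le_mul_of_nonneg_left hlog (by positivity)

/-- Chang's theorem: if `A ⊆ G` has density `α > 0` and
`Λ = {γ : |1̂_A(γ)| ≥ εα}`, then there is `Γ` with `|Γ| ≤ 2ε⁻² log α⁻¹` such that every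
`γ ∈ Λ` is a `{-1,0,1}`-signed combination of elements of `Γ`. -/
theorem stmt13 {G : Type*} [AddCommGroup G] [Fintype G] (A : Finset G) (ε α : ℝ)
    (hα : α = (A.card : ℝ) / (Fintype.card G : ℝ)) (hpos : 0 < α)
    (hε : 0 < ε) (hε1 : ε ≤ 1) :
    ∃ Γ : Finset (AddChar G ℂ), (Γ.card : ℝ) ≤ 2 * ε⁻¹ ^ 2 * Real.log α⁻¹ ∧
      ∀ γ : AddChar G ℂ,
        ε * α ≤ ‖(∑ x ∈ A, (starRingEnd ℂ) (γ x)) / (Fintype.card G : ℂ)‖ →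
        ∃ σ : AddChar G ℂ → ℤ, (∀ lam, σ lam = -1 ∨ σ lam = 0 ∨ σ lam = 1) ∧
          ∀ x : G, γ x = ∏ lam ∈ Γ, lam x ^ σ lam := by
  classical
  set Λ : Finset (AddChar G ℂ) := Finset.univ.filter fun γ =>
    ε * α ≤ ‖(∑ x ∈ A, (starRingEnd ℂ) (γ x)) / (Fintype.card G : ℂ)‖ with hΛ
  have hα1 : α ≤ 1 := by
    rw [hα]
    apply div_le_one_of_le₀
    · exact_mod_cast Finset.card_le_univ A
    · positivity
  have hlog_nonneg : 0 ≤ Real.log α⁻¹ :=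
    Real.log_nonneg ((one_le_inv₀ hpos).2 hα1)
  have hbd_nonneg : (0:ℝ) ≤ 2 * ε⁻¹ ^ 2 * Real.log α⁻¹ := by positivity
  obtain ⟨Γ, hΓsub, hΓcard, hspan⟩ :=
    Finset.exists_subset_addSpan_card_le_of_forall_addDissociated
      (s := Λ) (d := ⌊2 * ε⁻¹ ^ 2 * Real.log α⁻¹⌋₊)
      (fun s' hs' hdis => Nat.le_floor <| by
        apply chang_dissociated_bound A ε α hα hpos hε s' hdis
        intro γ hγ
        have := hs' hγ
        rw [hΛ, Finset.mem_filter] at this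
        exact this.2)
  refine ⟨Γ, ?_, ?_⟩
  · calc (Γ.card : ℝ) ≤ (⌊2 * ε⁻¹ ^ 2 * Real.log α⁻¹⌋₊ : ℝ) := by exact_mod_cast hΓcard
      _ ≤ 2 * ε⁻¹ ^ 2 * Real.log α⁻¹ := Nat.floor_le hbd_nonneg
  · intro γ hγ
    have hγΛ : γ ∈ Λ := by rw [hΛ, Finset.mem_filter]; exact ⟨Finset.mem_univ _, hγ⟩
    have hγspan := hspan hγΛ
    rw [Finset.mem_addSpan] at hγspan
    obtain ⟨σ, hσ, hσγ⟩ := hγspan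
    refine ⟨σ, hσ, fun x => ?_⟩
    rw [← hσγ, AddChar.sum_apply]
    apply Finset.prod_congr rfl
    intro lam _
    rw [AddChar.zsmul_apply]
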